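/- Let H, K be Hilbert spaces, ν : H → K an isometry, and g a self-adjoint operator on K with ‖g‖ ≤ M. For β a self-adjoint operator on H with ν* g ν ≤ β and ε > 0, define the operator α_ε on K by α_ε = ν(β + ε)ν* + (1 − νν*)(ε⁻¹M² + M). Then α_ε ≥ g. (Equivalently, in 2×2 block form with respect to Ran(ν): if g = [[g₁₁, g₁₂],[g₂₁, g₂₂]] with g₁₁ ≤ β and ‖g‖ ≤ M, then [[β + ε, 0],[0, ε⁻¹M² + M]] ≥ g.) -/

import Mathlib

open ContinuousLinearMap

open scoped InnerProductSpace

set_option maxHeartbeats 1000000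

noncomputable section

/-- Let `H`, `K` be Hilbert spaces, `ν : H → K` an isometry,
and `g` a self-adjoint operator on `K` with `‖g‖ ≤ M`.  For `β` a self-adjoint
operator on `H` with `ν* g ν ≤ β` and `ε > 0`, the operator
`α_ε = ν (β + ε) ν* + (ε⁻¹ M² + M)(1 − ν ν*)` on `K` dominates `g`:
`g ≤ α_ε` in the operator order. -/
theorem compression_schur_complement_estimate
    {H K : Type*} [NormedAddCommGroup H] [InnerProductSpace ℂ H] [CompleteSpace H]
    [NormedAddCommGroup K] [InnerProductSpace ℂ K] [CompleteSpace K]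
    (ν : H →L[ℂ] K) (hν : (adjoint ν) ∘L ν = 1)
    (g : K →L[ℂ] K) (hg : IsSelfAdjoint g) (M : ℝ) (hgM : ‖g‖ ≤ M)
    (β : H →L[ℂ] H) (hβ : IsSelfAdjoint β)
    (hdom : (β - (adjoint ν) ∘L g ∘L ν).IsPositive)
    (ε : ℝ) (hε : 0 < ε) :
    ((ν ∘L (β + (ε : ℂ) • 1) ∘L (adjoint ν) +
        ((ε⁻¹ * M ^ 2 + M : ℝ) : ℂ) • (1 - ν ∘L (adjoint ν))) - g).IsPositive := by
  have hM0 : 0 ≤ M := le_trans (norm_nonneg g) hgM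
  set c : ℝ := ε⁻¹ * M ^ 2 + M with hc
  -- self-adjointness
  have hS : IsSelfAdjoint (β + (ε : ℂ) • (1 : H →L[ℂ] H)) := by
    refine hβ.add ?_
    rw [IsSelfAdjoint, star_smul, star_one]
    simp
  have hsa1 : IsSelfAdjoint (ν ∘L (β + (ε : ℂ) • 1) ∘L (adjoint ν)) := by
    rw [IsSelfAdjoint, star_eq_adjoint, adjoint_comp, adjoint_comp, adjoint_adjoint,
      hS.adjoint_eq, comp_assoc]
  have hsa2 : IsSelfAdjoint ((1 : K →L[ℂ] K) - ν ∘L adjoint ν) := by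
    refine (IsSelfAdjoint.one (K →L[ℂ] K)).sub ?_
    rw [IsSelfAdjoint, star_eq_adjoint, adjoint_comp, adjoint_adjoint]
  have hsa2' : IsSelfAdjoint (((c : ℝ) : ℂ) • ((1 : K →L[ℂ] K) - ν ∘L adjoint ν)) := by
    rw [IsSelfAdjoint, star_smul, hsa2.star_eq]
    simp
  constructor
  · exact ((hsa1.add hsa2').sub hg).isSymmetric
  intro x
  rw [reApplyInnerSelf_apply]
  set u : H := adjoint ν x with hu
  set v : K := ν u with hv
  set y : K := x - v with hy
  have hxy : x = v + y := by simp [hy]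
  have hνy : adjoint ν y = 0 := by
    have h1 : adjoint ν v = u := by
      rw [hv, ← comp_apply, hν, ContinuousLinearMap.one_apply]
    simp [hy, map_sub, h1, hu]
  have hyv : ⟪y, v⟫_ℂ = 0 := by
    rw [hv, ← adjoint_inner_left, hνy, inner_zero_left]
  have hinner_ny : ∀ w : H, ⟪ν w, y⟫_ℂ = 0 := by
    intro w
    rw [← inner_conj_symm, ← adjoint_inner_left, hνy, inner_zero_left, map_zero]
  have hnv : ‖v‖ = ‖u‖ := by
    have h1 : ⟪v, v⟫_ℂ = ⟪u, u⟫_ℂ := by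
      rw [hv, ← adjoint_inner_left, ← comp_apply, hν, ContinuousLinearMap.one_apply]
    rw [inner_self_eq_norm_sq_to_K, inner_self_eq_norm_sq_to_K] at h1
    have h2 : ‖v‖ ^ 2 = ‖u‖ ^ 2 := by exact_mod_cast h1
    nlinarith [norm_nonneg v, norm_nonneg u]
  have hνw : ∀ w : H, ⟪ν w, v⟫_ℂ = ⟪w, u⟫_ℂ := by
    intro w
    rw [← inner_conj_symm, hv, ← adjoint_inner_left, ← comp_apply, hν, ContinuousLinearMap.one_apply,
      inner_conj_symm]
  have hDx : ((ν ∘L (β + (ε : ℂ) • 1) ∘L (adjoint ν) +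
        ((c : ℝ) : ℂ) • (1 - ν ∘L (adjoint ν))) - g) x
      = ν (β u) + (ε : ℂ) • v + (c : ℂ) • y - g x := by
    simp only [sub_apply, add_apply, smul_apply, comp_apply, ContinuousLinearMap.one_apply, map_add,
      map_smul, ← hu, ← hv, hy, smul_sub]
  rw [hDx]
  have e1 : ⟪ν (β u), x⟫_ℂ = ⟪β u, u⟫_ℂ := by
    rw [hxy, inner_add_right, hνw, hinner_ny, add_zero]
  have hvy : ⟪v, y⟫_ℂ = 0 := hinner_ny u
  have e2 : ⟪v, x⟫_ℂ = (‖u‖ ^ 2 : ℝ) := by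
    rw [hxy, inner_add_right, hvy, add_zero, inner_self_eq_norm_sq_to_K, hnv]
    norm_cast
  have e3 : ⟪y, x⟫_ℂ = (‖y‖ ^ 2 : ℝ) := by
    rw [hxy, inner_add_right, hyv, zero_add, inner_self_eq_norm_sq_to_K]
    norm_cast
  have e4 : ⟪g y, v⟫_ℂ = (starRingEnd ℂ) ⟪g v, y⟫_ℂ := by
    rw [← inner_conj_symm]
    congr 1
    rw [← hg.adjoint_eq, adjoint_inner_left, hg.adjoint_eq]
  have e5 : ⟪g x, x⟫_ℂ = ⟪g v, v⟫_ℂ + ⟪g v, y⟫_ℂ + (starRingEnd ℂ) ⟪g v, y⟫_ℂ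
      + ⟪g y, y⟫_ℂ := by
    rw [hxy, map_add, inner_add_left, inner_add_right, inner_add_right, e4]
    ring
  rw [inner_sub_left, inner_add_left, inner_add_left, inner_smul_left, inner_smul_left,
    e1, e2, e3, e5]
  simp only [Complex.sub_re, Complex.add_re, Complex.mul_re, Complex.conj_re,
    Complex.conj_im, Complex.ofReal_re, Complex.ofReal_im, RCLike.re_to_complex]
  have hbv : ‖g v‖ ≤ M * ‖u‖ := by
    calc ‖g v‖ ≤ ‖g‖ * ‖v‖ := g.le_opNorm v
    _ ≤ M * ‖u‖ := by rw [hnv]; exact mul_le_mul_of_nonneg_right hgM (norm_nonneg u)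
  have hb1 : (⟪g v, y⟫_ℂ).re ≤ M * ‖u‖ * ‖y‖ := by
    calc (⟪g v, y⟫_ℂ).re ≤ ‖⟪g v, y⟫_ℂ‖ := Complex.re_le_norm _
    _ ≤ ‖g v‖ * ‖y‖ := norm_inner_le_norm _ _
    _ ≤ M * ‖u‖ * ‖y‖ := mul_le_mul_of_nonneg_right hbv (norm_nonneg y)
  have hb2 : (⟪g y, y⟫_ℂ).re ≤ M * ‖y‖ ^ 2 := by
    calc (⟪g y, y⟫_ℂ).re ≤ ‖⟪g y, y⟫_ℂ‖ := Complex.re_le_norm _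
    _ ≤ ‖g y‖ * ‖y‖ := norm_inner_le_norm _ _
    _ ≤ (M * ‖y‖) * ‖y‖ := by
        refine mul_le_mul_of_nonneg_right ?_ (norm_nonneg y)
        calc ‖g y‖ ≤ ‖g‖ * ‖y‖ := g.le_opNorm y
        _ ≤ M * ‖y‖ := mul_le_mul_of_nonneg_right hgM (norm_nonneg y)
    _ = M * ‖y‖ ^ 2 := by ring
  have hdom' : (⟪g v, v⟫_ℂ).re ≤ (⟪β u, u⟫_ℂ).re := by
    have h0 := hdom.2 u
    rw [reApplyInnerSelf_apply, sub_apply, inner_sub_left] at h0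
    have h1 : ⟪((adjoint ν) ∘L g ∘L ν) u, u⟫_ℂ = ⟪g v, v⟫_ℂ := by
      rw [comp_apply, comp_apply, adjoint_inner_left, ← hv]
    rw [h1] at h0
    simp only [Complex.sub_re, RCLike.re_to_complex] at h0
    linarith
  have hinv : ε * ε⁻¹ = 1 := mul_inv_cancel₀ (ne_of_gt hε)
  rw [hc]
  have key : 2 * (M * ‖u‖ * ‖y‖) ≤ ε * ‖u‖ ^ 2 + ε⁻¹ * M ^ 2 * ‖y‖ ^ 2 := by
    have h0 := mul_nonneg (inv_nonneg.mpr hε.le) (sq_nonneg (ε * ‖u‖ - M * ‖y‖))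
    have h1 : ε⁻¹ * (ε * ‖u‖ - M * ‖y‖) ^ 2
        = ε * ‖u‖ ^ 2 - 2 * (M * ‖u‖ * ‖y‖) + ε⁻¹ * M ^ 2 * ‖y‖ ^ 2 := by
      field_simp
      ring
    linarith [h1 ▸ h0]
  nlinarith [key, hb1, hb2, hdom']

end
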